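/- Fix 0 ≤ q < 1 and M > 0. Define r(h) for h ∈ [0, (1−q)/M) by r(h) = (q + 1 + √((1−q)² − 4Mh))/2 if 4Mh ≤ (1−q)², and r(h) = √(q + Mh) otherwise. Then r is decreasing in h on [0, (1−q)²/(4M)], increasing on [(1−q)²/(4M), (1−q)/M), and attains its minimum value (q+1)/2 at h = (1−q)²/(4M). -/

import Mathlib

/-- The spectral radius `r(h)` of the PI comparison matrix, as a function of the
integral gain `h`, is strictly decreasing on `[0, (1-q)²/(4M)]`, strictly increasing on
`[(1-q)²/(4M), (1-q)/M)`, and attains its minimum value `(q+1)/2` at `h = (1-q)²/(4M)`. -/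
theorem stmt7 (q M : ℝ) (hq0 : 0 ≤ q) (hq1 : q < 1) (hM : 0 < M)
    (r : ℝ → ℝ)
    (hr : ∀ h ∈ Set.Ico (0 : ℝ) ((1 - q) / M),
      r h = if 4 * M * h ≤ (1 - q) ^ 2
        then (q + 1 + Real.sqrt ((1 - q) ^ 2 - 4 * M * h)) / 2
        else Real.sqrt (q + M * h)) :
    StrictAntiOn r (Set.Icc 0 ((1 - q) ^ 2 / (4 * M))) ∧
    StrictMonoOn r (Set.Ico ((1 - q) ^ 2 / (4 * M)) ((1 - q) / M)) ∧
    r ((1 - q) ^ 2 / (4 * M)) = (q + 1) / 2 ∧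
    (∀ h ∈ Set.Ico (0 : ℝ) ((1 - q) / M), (q + 1) / 2 ≤ r h) := by
  have hq : 0 < 1 - q := by linarith
  set A := (1 - q) ^ 2 / (4 * M) with hA
  have hA0 : 0 ≤ A := by positivity
  have hAeq : 4 * M * A = (1 - q) ^ 2 := by
    rw [hA]; field_simp
  have hAlt : A < (1 - q) / M := by
    rw [div_lt_div_iff₀ (by positivity) hM]
    nlinarith [mul_pos hq hM]
  -- value on first branch
  have h1 : ∀ h ∈ Set.Icc (0:ℝ) A,
      r h = (q + 1 + Real.sqrt ((1 - q) ^ 2 - 4 * M * h)) / 2 := by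
    intro h hh
    have hle : 4 * M * h ≤ (1 - q) ^ 2 := by
      have := hh.2
      nlinarith
    rw [hr h ⟨hh.1, lt_of_le_of_lt hh.2 hAlt⟩, if_pos hle]
  -- value on second part
  have hsq : q + M * A = ((q + 1) / 2) ^ 2 := by
    linarith [hAeq]
  have h2 : ∀ h ∈ Set.Ico A ((1 - q) / M), r h = Real.sqrt (q + M * h) := by
    intro h hh
    rcases eq_or_lt_of_le hh.1 with heq | hlt
    · rw [← heq, hr A ⟨hA0, hAlt⟩, if_pos hAeq.le]
      rw [show (1 - q) ^ 2 - 4 * M * A = 0 by linarith [hAeq], Real.sqrt_zero,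
        hsq, Real.sqrt_sq (by linarith)]
      ring
    · have : ¬ (4 * M * h ≤ (1 - q) ^ 2) := by
        push_neg; nlinarith
      rw [hr h ⟨le_trans hA0 hh.1, hh.2⟩, if_neg this]
  refine ⟨?_, ?_, ?_, ?_⟩
  · intro a ha b hb hab
    rw [h1 a ha, h1 b hb]
    have hb0 : (0:ℝ) ≤ (1 - q) ^ 2 - 4 * M * b := by nlinarith [hb.2, hAeq]
    have : Real.sqrt ((1 - q) ^ 2 - 4 * M * b) < Real.sqrt ((1 - q) ^ 2 - 4 * M * a) :=
      Real.sqrt_lt_sqrt hb0 (by nlinarith)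
    linarith
  · intro a ha b hb hab
    rw [h2 a ha, h2 b hb]
    exact Real.sqrt_lt_sqrt (by nlinarith [ha.1]) (by nlinarith)
  · rw [h1 A ⟨hA0, le_refl A⟩, show (1 - q) ^ 2 - 4 * M * A = 0 by linarith [hAeq],
      Real.sqrt_zero]
    ring
  · intro h hh
    by_cases hc : 4 * M * h ≤ (1 - q) ^ 2
    · have : r h = (q + 1 + Real.sqrt ((1 - q) ^ 2 - 4 * M * h)) / 2 := by
        rw [hr h hh, if_pos hc]
      rw [this]
      have := Real.sqrt_nonneg ((1 - q) ^ 2 - 4 * M * h)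
      linarith
    · have : r h = Real.sqrt (q + M * h) := by rw [hr h hh, if_neg hc]
      rw [this]
      push_neg at hc
      have : ((q + 1) / 2) ^ 2 ≤ q + M * h := by nlinarith
      calc (q + 1) / 2 = Real.sqrt (((q + 1) / 2) ^ 2) :=
            (Real.sqrt_sq (by linarith)).symm
        _ ≤ Real.sqrt (q + M * h) := Real.sqrt_le_sqrt this
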